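/- Let T be a bounded linear operator on a complex Banach space X, and suppose that for every nonempty relatively open subset U of the spectrum σ(T), the glocal spectral subspace 𝒳_T(closure(U)) is dense in X. Then for the adjoint operator T* on the dual space X*, the glocal spectral subspace 𝒳*_{T*}(F) equals {0} for every closed set F that is a proper subset of σ(T*). -/

import Mathlib

open Set Filter Topology Bornology Complex

noncomputable section




variable {X : Type*} [NormedAddCommGroup X] [NormedSpace ℂ X]

/-- The glocal spectral subspace `𝒳_T(F)` of a bounded operator `T`. -/
def glocalSubspace (T : X →L[ℂ] X) (F : Set ℂ) : Set X :=
  {x | ∃ f : ℂ → X, AnalyticOnNhd ℂ f Fᶜ ∧ ∀ z ∈ Fᶜ, T (f z) - z • f z = x}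

/-- The local resolvent set `ρ_T(x)`. -/
def localResolventSet (T : X →L[ℂ] X) (x : X) : Set ℂ :=
  ⋃₀ {U : Set ℂ | IsOpen U ∧ ∃ f : ℂ → X, AnalyticOnNhd ℂ f U ∧ ∀ z ∈ U, T (f z) - z • f z = x}

/-- The local spectrum `σ_T(x)`. -/
def localSpectrum (T : X →L[ℂ] X) (x : X) : Set ℂ := (localResolventSet T x)ᶜ

/-- The local spectral subspace `X_T(F)`. -/
def localSubspace (T : X →L[ℂ] X) (F : Set ℂ) : Set X := {x | localSpectrum T x ⊆ F}

/-- Dunford's property (C). -/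
def HasPropertyC (T : X →L[ℂ] X) : Prop :=
  ∀ F : Set ℂ, IsClosed F → IsClosed (localSubspace T F)

/-- The single-valued extension property. -/
def HasSVEP (T : X →L[ℂ] X) : Prop :=
  ∀ U : Set ℂ, IsOpen U → ∀ f : ℂ → X, AnalyticOnNhd ℂ f U →
    (∀ z ∈ U, T (f z) - z • f z = 0) → ∀ z ∈ U, f z = 0

/-- The point spectrum of an operator. -/
def pointSpectrum (T : X →L[ℂ] X) : Set ℂ := {μ : ℂ | ∃ x : X, x ≠ 0 ∧ T x = μ • x}

/-- The local spectral radius `r_T(x) = limsup_n ‖Tⁿx‖^(1/n)`. -/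
def localSpectralRadius (T : X →L[ℂ] X) (x : X) : ℝ :=
  Filter.limsup (fun n : ℕ => ‖(T ^ n) x‖ ^ (1 / (n : ℝ))) Filter.atTop

/-- The adjoint operator `T*` acting on the dual space `X*`. -/
def dualOp (T : X →L[ℂ] X) : StrongDual ℂ X →L[ℂ] StrongDual ℂ X :=
  (ContinuousLinearMap.compL ℂ X X ℂ).flip T

/-- Restriction of an operator to an invariant subspace. -/
def restrictOp (T : X →L[ℂ] X) (M : Submodule ℂ X) (h : ∀ x ∈ M, T x ∈ M) : M →L[ℂ] M :=
  (T.comp M.subtypeL).codRestrict M (fun x => h x.1 x.2)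

/-- The full spectrum `η(K)`: the union of `K` with all the bounded connected
components of its complement. -/
def fullSpectrum (K : Set ℂ) : Set ℂ :=
  K ∪ {z : ℂ | z ∉ K ∧ Bornology.IsBounded (connectedComponentIn Kᶜ z)}

/-- `U` is a nonempty relatively open subset of `σ(T)`. -/
def RelativelyOpenInSpectrum (T : X →L[ℂ] X) (U : Set ℂ) : Prop :=
  U.Nonempty ∧ ∃ V : Set ℂ, IsOpen V ∧ U = spectrum ℂ T ∩ V

set_option synthInstance.maxHeartbeats 1000000
set_option maxHeartbeats 1000000

lemma dualOp_apply (T : X →L[ℂ] X) (φ : StrongDual ℂ X) (x : X) :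
    dualOp T φ x = φ (T x) := rfl

lemma dualOp_mul (A B : X →L[ℂ] X) : dualOp A * dualOp B = dualOp (B * A) := by
  ext φ x; rfl

lemma dualOp_one : dualOp (1 : X →L[ℂ] X) = 1 := by ext φ x; rfl

lemma spectrum_dualOp_subset (T : X →L[ℂ] X) :
    spectrum ℂ (dualOp T) ⊆ spectrum ℂ T := by
  intro z hz
  by_contra hzT
  rw [spectrum.notMem_iff] at hzT
  obtain ⟨u, hu⟩ := hzT
  apply spectrum.notMem_iff.mpr _ hz
  refine ⟨⟨dualOp u.val, dualOp u.inv, ?_, ?_⟩, ?_⟩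
  · rw [dualOp_mul, u.inv_val, dualOp_one]
  · rw [dualOp_mul, u.val_inv, dualOp_one]
  · show dualOp u.val = _
    rw [hu]
    ext φ x
    simp [dualOp_apply, Algebra.algebraMap_eq_smul_one, ContinuousLinearMap.sub_apply,
      ContinuousLinearMap.smul_apply, map_sub, map_smul]

/-- If every glocal spectral subspace of `T` associated to the closure of a nonempty
relatively open subset of `σ(T)` is dense, then `𝒳*_{T*}(F) = {0}` for every closed
proper subset `F` of `σ(T*)`. -/
theorem adjoint_glocal_eq_zero {X : Type*} [NormedAddCommGroup X] [NormedSpace ℂ X]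
    [CompleteSpace X] (T : X →L[ℂ] X)
    (hdense : ∀ U : Set ℂ, RelativelyOpenInSpectrum T U →
      Dense (glocalSubspace T (closure U)))
    (F : Set ℂ) (hF : IsClosed F) (hFs : F ⊂ spectrum ℂ (dualOp T)) :
    glocalSubspace (dualOp T) F = {0} := by
  -- pick λ ∈ σ(T*) \ F, hence λ ∈ σ(T)
  obtain ⟨hFsub, hne⟩ := hFs
  obtain ⟨l, hlspec, hlF⟩ := Set.not_subset.mp hne
  have hlT : l ∈ spectrum ℂ T := spectrum_dualOp_subset T hlspec
  -- a ball around l whose closure avoids F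
  obtain ⟨ε, hε, hball⟩ := Metric.isOpen_iff.mp hF.isOpen_compl l hlF
  set V : Set ℂ := Metric.ball l (ε / 2) with hV
  set U : Set ℂ := spectrum ℂ T ∩ V with hU
  have hUrel : RelativelyOpenInSpectrum T U :=
    ⟨⟨l, hlT, Metric.mem_ball_self (by linarith)⟩, V, Metric.isOpen_ball, rfl⟩
  set G : Set ℂ := closure U with hG
  have hGball : G ⊆ Metric.ball l ε := by
    calc G ⊆ closure V := closure_mono Set.inter_subset_right
      _ ⊆ Metric.closedBall l (ε/2) := Metric.closure_ball_subset_closedBall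
      _ ⊆ Metric.ball l ε := Metric.closedBall_subset_ball (by linarith)
  have hGF : G ⊆ Fᶜ := hGball.trans hball
  obtain ⟨R, hR⟩ : ∃ R, G ⊆ Metric.closedBall 0 R :=
    (Metric.isBounded_ball.subset hGball).subset_closedBall 0
  have hDense := hdense U hUrel
  -- now show the subspace is {0}
  apply Set.eq_singleton_iff_unique_mem.mpr
  constructor
  · exact ⟨0, analyticOnNhd_const, fun z _ => by simp⟩
  · rintro φ ⟨g, hg, hgeq⟩
    -- first: g z x = 0 for all z ∈ Fᶜ and x in the dense subspace
    have key : ∀ z ∈ Fᶜ, ∀ x ∈ glocalSubspace T G, g z x = 0 := by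
      rintro z₀ hz₀ x ⟨f, hf, hfeq⟩
      classical
      set h : ℂ → ℂ := fun z => if z ∈ F then φ (f z) else g z x with hh
      -- h = φ ∘ f on Gᶜ, h = (fun z => g z x) on Fᶜ
      have hagree : ∀ z ∈ Fᶜ ∩ Gᶜ, g z x = φ (f z) := by
        intro z ⟨hzF, hzG⟩
        have h1 := hgeq z hzF
        have h2 : (dualOp T (g z) - z • g z) (f z) = φ (f z) := by rw [h1]
        have h3 : g z (T (f z)) - z * g z (f z) = φ (f z) := by
          simpa [dualOp_apply, ContinuousLinearMap.sub_apply,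
            ContinuousLinearMap.smul_apply, smul_eq_mul] using h2
        calc g z x = g z (T (f z) - z • f z) := by rw [hfeq z hzG]
          _ = g z (T (f z)) - z * g z (f z) := by rw [map_sub, map_smul]; rfl
          _ = φ (f z) := h3
      have hhF : ∀ z ∈ Fᶜ, h z = g z x := by
        intro z hz
        simp only [hh]
        rw [if_neg hz]
      have hhG : ∀ z ∈ Gᶜ, h z = φ (f z) := by
        intro z hz
        simp only [hh]
        by_cases hzF : z ∈ F
        · rw [if_pos hzF]
        · rw [if_neg hzF, hagree z ⟨hzF, hz⟩]
      -- h is entire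
      have hanF : AnalyticOnNhd ℂ (fun z => g z x) Fᶜ :=
        (ContinuousLinearMap.apply ℂ ℂ x).comp_analyticOnNhd hg
      have hanG : AnalyticOnNhd ℂ (fun z => φ (f z)) Gᶜ :=
        (φ : X →L[ℂ] ℂ).comp_analyticOnNhd hf
      have hcover : ∀ z : ℂ, z ∈ Fᶜ ∪ Gᶜ := by
        intro z
        by_cases hz : z ∈ F
        · exact Or.inr (fun hzG => hGF hzG hz)
        · exact Or.inl hz
      have hdiff : Differentiable ℂ h := by
        intro z
        rcases hcover z with hz | hz
        · have : AnalyticAt ℂ h z := by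
            refine (hanF z hz).congr ?_
            filter_upwards [hF.isOpen_compl.mem_nhds hz] with w hw
            exact (hhF w hw).symm
          exact this.differentiableAt
        · have : AnalyticAt ℂ h z := by
            refine (hanG z hz).congr ?_
            filter_upwards [(isClosed_closure.isOpen_compl).mem_nhds hz] with w hw
            exact (hhG w hw).symm
          exact this.differentiableAt
      -- h tends to 0 at infinity
      have hbound : ∀ z : ℂ, max ‖T‖ R < ‖z‖ → ‖h z‖ ≤ ‖φ‖ * ‖x‖ / (‖z‖ - ‖T‖) := by
        intro z hz
        have hzT : ‖T‖ < ‖z‖ := lt_of_le_of_lt (le_max_left _ _) hz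
        have hzG : z ∈ Gᶜ := fun hzG => by
          have := hR hzG
          simp only [Metric.mem_closedBall, dist_zero_right] at this
          have := lt_of_le_of_lt (le_max_right ‖T‖ R) hz
          linarith
        have hfz := hfeq z hzG
        have hub : (‖z‖ - ‖T‖) * ‖f z‖ ≤ ‖x‖ := by
          have : ‖z • f z‖ ≤ ‖T (f z)‖ + ‖x‖ := by
            calc ‖z • f z‖ = ‖T (f z) - (T (f z) - z • f z)‖ := by rw [sub_sub_cancel]
              _ ≤ ‖T (f z)‖ + ‖T (f z) - z • f z‖ := norm_sub_le _ _
              _ = ‖T (f z)‖ + ‖x‖ := by rw [hfz]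
          have hTf : ‖T (f z)‖ ≤ ‖T‖ * ‖f z‖ := T.le_opNorm _
          rw [norm_smul] at this
          nlinarith [norm_nonneg (f z)]
        have hpos : 0 < ‖z‖ - ‖T‖ := by linarith
        rw [hhG z hzG]
        calc ‖φ (f z)‖ ≤ ‖φ‖ * ‖f z‖ := φ.le_opNorm _
          _ ≤ ‖φ‖ * (‖x‖ / (‖z‖ - ‖T‖)) := by
              apply mul_le_mul_of_nonneg_left _ (norm_nonneg φ)
              rw [le_div_iff₀ hpos, mul_comm]
              exact hub
          _ = ‖φ‖ * ‖x‖ / (‖z‖ - ‖T‖) := by ring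
      have htend : Tendsto h (cocompact ℂ) (𝓝 0) := by
        have hnorm : Tendsto (fun z : ℂ => ‖z‖) (cocompact ℂ) atTop :=
          tendsto_norm_cocompact_atTop
        refine squeeze_zero_norm' (a := fun z : ℂ => ‖φ‖ * ‖x‖ / (‖z‖ - ‖T‖)) ?_ ?_
        · filter_upwards [hnorm.eventually_gt_atTop (max ‖T‖ R)] with z hz
          exact hbound z hz
        · have h1 : Tendsto (fun z : ℂ => ‖z‖ - ‖T‖) (cocompact ℂ) atTop := by
            simpa [sub_eq_add_neg] using tendsto_atTop_add_const_right _ (-‖T‖) hnorm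
          exact h1.const_div_atTop _
      have hzero : h z₀ = 0 := hdiff.apply_eq_of_tendsto_cocompact z₀ htend
      rw [hhF z₀ hz₀] at hzero
      exact hzero
    -- density: g z = 0 for all z ∈ Fᶜ
    have hFne : Fᶜ.Nonempty := ⟨l, hlF⟩
    obtain ⟨z₀, hz₀⟩ := hFne
    have hco : ⇑(g z₀) = fun _ : X => (0 : ℂ) :=
      Continuous.ext_on hDense (g z₀).continuous continuous_const
        (fun x hx => key z₀ hz₀ x hx)
    have hgz : g z₀ = 0 := ContinuousLinearMap.ext fun y => by
      simpa using congrFun hco y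
    have := hgeq z₀ hz₀
    rw [hgz] at this
    simpa using this.symm

end
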